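/- Let ρ > 1, α ∈ (0,1] with αρ ≤ 1, and let c, c₁, c₂ > 0 and ϰ, ϰ′ > 0. Let 𝒰 and 𝒩 be independent centered Gaussian random variables with variances c₁ and c₂, respectively. Then there is δ′ > 0 such that, as ε → 0⁺, sup over x ∈ K_ϰ(ε) and intervals [a,b] ⊆ K_{ϰ′}(ε) of | P( c|x|^ρ + ε^{1−αρ} 𝒩 ∈ [a,b] and x + ε^{1−α} 𝒰 ≥ 0 ) − P( c|x + ε^{1−α} 𝒰|^ρ + ε^{1−αρ} 𝒩 ∈ [a,b] and x + ε^{1−α} 𝒰 ≥ 0 ) | is o(ε^{δ′}). -/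

import Mathlib

open MeasureTheory

open Real ProbabilityTheory Filter in
private lemma grad_ineq' {ρ : ℝ} (hρ : 1 ≤ ρ) {p q : ℝ} (hq : 0 ≤ q) (hpq : q ≤ p) :
    p ^ ρ - q ^ ρ ≤ ρ * p ^ (ρ - 1) * (p - q) := by
  have hp : 0 ≤ p := hq.trans hpq
  rcases eq_or_lt_of_le hp with h0 | h0
  · have : q = 0 := le_antisymm (h0 ▸ hpq) hq
    simp [this, ← h0, Real.zero_rpow (by linarith : ρ ≠ 0)]
  · have hs : (-1 : ℝ) ≤ q / p - 1 := by
      have : 0 ≤ q / p := div_nonneg hq hp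
      linarith
    have hb := one_add_mul_self_le_rpow_one_add hs hρ
    have h1 : (1 + (q / p - 1)) = q / p := by ring
    rw [h1, Real.div_rpow hq hp] at hb
    have hppos : (0:ℝ) < p ^ ρ := Real.rpow_pos_of_pos h0 _
    have hb2 : (1 + ρ * (q / p - 1)) * p ^ ρ ≤ q ^ ρ := by
      rw [← div_mul_cancel₀ (q ^ ρ) hppos.ne']
      exact mul_le_mul_of_nonneg_right hb hppos.le
    have hsub : p ^ (ρ - 1) = p ^ ρ / p := by
      rw [Real.rpow_sub h0, Real.rpow_one]
    rw [hsub]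
    have hexp : (1 + ρ * (q / p - 1)) * p ^ ρ = p ^ ρ + ρ * (p ^ ρ / p) * (q - p) := by
      field_simp
    rw [hexp] at hb2
    linarith

open Real ProbabilityTheory Filter in
private lemma abs_rpow_lipschitz' {ρ : ℝ} (hρ : 1 ≤ ρ) {R p q : ℝ} (hp : |p| ≤ R)
    (hq : |q| ≤ R) : |(|p| ^ ρ - |q| ^ ρ)| ≤ ρ * R ^ (ρ - 1) * |p - q| := by
  have key : ∀ s t : ℝ, |s| ≤ R → |t| ≤ R → |t| ≤ |s| →
      |(|s| ^ ρ - |t| ^ ρ)| ≤ ρ * R ^ (ρ - 1) * |s - t| := by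
    intro s t hs ht hts
    have h1 : |t| ^ ρ ≤ |s| ^ ρ := Real.rpow_le_rpow (abs_nonneg t) hts (by linarith)
    rw [abs_of_nonneg (by linarith)]
    have h2 := grad_ineq' hρ (abs_nonneg t) hts
    have h3 : |s| ^ (ρ - 1) ≤ R ^ (ρ - 1) :=
      Real.rpow_le_rpow (abs_nonneg s) hs (by linarith)
    have h4 : |s| - |t| ≤ |s - t| := abs_sub_abs_le_abs_sub s t
    have h5 : ρ * |s| ^ (ρ - 1) * (|s| - |t|) ≤ ρ * R ^ (ρ - 1) * |s - t| := by
      apply mul_le_mul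
      · apply mul_le_mul_of_nonneg_left h3 (by linarith)
      · exact h4
      · linarith [hts, abs_nonneg t]
      · have hR : 0 ≤ R := (abs_nonneg s).trans hs
        have : (0:ℝ) ≤ R ^ (ρ - 1) := Real.rpow_nonneg hR _
        nlinarith
    linarith
  rcases le_total |q| |p| with h | h
  · exact key p q hp hq h
  · rw [abs_sub_comm, abs_sub_comm p q]; exact key q p hq hp h

private lemma strip1' {a b t dd D : ℝ} (hD : |dd| ≤ D) (h1 : t ∈ Set.Icc a b)
    (h2 : t + dd ∉ Set.Icc a b) :
    t ∈ Set.Icc (a - D) (a + D) ∪ Set.Icc (b - D) (b + D) := by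
  obtain ⟨hd1, hd2⟩ := abs_le.mp hD
  simp only [Set.mem_Icc, Set.mem_union, not_and_or, not_le] at *
  rcases h2 with h | h
  · exact Or.inl ⟨by linarith [h1.1], by linarith⟩
  · exact Or.inr ⟨by linarith, by linarith [h1.2]⟩

private lemma strip2' {a b t dd D : ℝ} (hD : |dd| ≤ D) (h1 : t ∉ Set.Icc a b)
    (h2 : t + dd ∈ Set.Icc a b) :
    t ∈ Set.Icc (a - D) (a + D) ∪ Set.Icc (b - D) (b + D) := by
  obtain ⟨hd1, hd2⟩ := abs_le.mp hD
  simp only [Set.mem_Icc, Set.mem_union, not_and_or, not_le] at *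
  rcases h1 with h | h
  · exact Or.inl ⟨by linarith [h2.1], by linarith⟩
  · exact Or.inr ⟨by linarith, by linarith [h2.2]⟩

open Real ProbabilityTheory Filter in
private lemma gaussian_Icc_le' {v : NNReal} (hv : v ≠ 0) (u w : ℝ) (huw : u ≤ w) :
    gaussianReal 0 v (Set.Icc u w) ≤ ENNReal.ofReal ((w - u) * (Real.sqrt (2 * π * v))⁻¹) := by
  rw [gaussianReal_apply_eq_integral 0 hv]
  apply ENNReal.ofReal_le_ofReal
  have hbd : ∀ x ∈ Set.Icc u w, gaussianPDFReal 0 v x ≤ (Real.sqrt (2 * π * v))⁻¹ := by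
    intro x _
    rw [gaussianPDFReal]
    have h1 : rexp (-(x - 0) ^ 2 / (2 * v)) ≤ 1 := by
      apply Real.exp_le_one_iff.2
      apply div_nonpos_of_nonpos_of_nonneg
      · simp [sq_nonneg]
      · positivity
    calc (Real.sqrt (2 * π * v))⁻¹ * rexp (-(x - 0) ^ 2 / (2 * v))
        ≤ (Real.sqrt (2 * π * v))⁻¹ * 1 := by
          apply mul_le_mul_of_nonneg_left h1 (by positivity)
      _ = (Real.sqrt (2 * π * v))⁻¹ := mul_one _
  calc ∫ x in Set.Icc u w, gaussianPDFReal 0 v x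
      ≤ ∫ _ in Set.Icc u w, (Real.sqrt (2 * π * v))⁻¹ := by
        apply setIntegral_mono_on
        · exact (integrable_gaussianPDFReal 0 v).integrableOn
        · exact integrableOn_const measure_Icc_lt_top.ne
        · exact measurableSet_Icc
        · exact hbd
    _ = (w - u) * (Real.sqrt (2 * π * v))⁻¹ := by
        rw [setIntegral_const, Real.volume_real_Icc_of_le huw, smul_eq_mul]

open Real ProbabilityTheory Filter in
private lemma gaussian_tail_le' {v : NNReal} (hv : v ≠ 0) {M : ℝ} (hM : 0 ≤ M) :
    gaussianReal 0 v {y : ℝ | M < |y|} ≤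
      ENNReal.ofReal (Real.sqrt 2 * rexp (-M ^ 2 / (4 * v))) := by
  have hvpos : (0:ℝ) < (v:ℝ) := by
    exact_mod_cast zero_lt_iff.2 hv
  rw [gaussianReal_apply_eq_integral 0 hv]
  apply ENNReal.ofReal_le_ofReal
  set s : Set ℝ := {y : ℝ | M < |y|} with hs
  set g : ℝ → ℝ := fun x => (Real.sqrt (2 * π * v))⁻¹ * rexp (-M ^ 2 / (4 * v)) * rexp (-(1/(4 * v)) * x ^ 2) with hg
  have hgint : Integrable g := by
    apply Integrable.const_mul
    exact integrable_exp_neg_mul_sq (by positivity)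
  have hbd : ∀ x ∈ s, gaussianPDFReal 0 v x ≤ g x := by
    intro x hx
    have hx2 : M ^ 2 ≤ x ^ 2 := by
      have : M < |x| := hx
      nlinarith [abs_nonneg x, sq_abs x]
    have hexp : rexp (-(x - 0) ^ 2 / (2 * (v:ℝ)))
        ≤ rexp (-M ^ 2 / (4 * (v:ℝ))) * rexp (-(1/(4 * (v:ℝ))) * x ^ 2) := by
      rw [← Real.exp_add]
      apply Real.exp_le_exp.2
      have e1 : -(x - 0) ^ 2 / (2 * (v:ℝ)) = (-2 * x ^ 2) / (4 * (v:ℝ)) := by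
        field_simp; ring
      have e2 : -M ^ 2 / (4 * (v:ℝ)) + -(1/(4 * (v:ℝ))) * x ^ 2
          = (-M ^ 2 - x ^ 2) / (4 * (v:ℝ)) := by
        field_simp; ring
      rw [e1, e2, div_le_div_iff₀ (by positivity) (by positivity)]
      nlinarith [sq_nonneg x]
    calc gaussianPDFReal 0 v x
        = (Real.sqrt (2 * π * v))⁻¹ * rexp (-(x - 0) ^ 2 / (2 * (v:ℝ))) := rfl
      _ ≤ (Real.sqrt (2 * π * v))⁻¹ *
            (rexp (-M ^ 2 / (4 * (v:ℝ))) * rexp (-(1/(4 * (v:ℝ))) * x ^ 2)) :=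
          mul_le_mul_of_nonneg_left hexp (by positivity)
      _ = g x := by rw [hg]; ring
  have hmeas : MeasurableSet s := measurableSet_lt measurable_const measurable_id.abs
  calc ∫ x in s, gaussianPDFReal 0 v x
      ≤ ∫ x in s, g x := by
        apply setIntegral_mono_on (integrable_gaussianPDFReal 0 v).integrableOn
          hgint.integrableOn hmeas hbd
    _ ≤ ∫ x, g x := by
        apply setIntegral_le_integral hgint
        filter_upwards with x
        rw [hg]; positivity
    _ = (Real.sqrt (2 * π * v))⁻¹ * rexp (-M ^ 2 / (4 * v)) * Real.sqrt (π / (1/(4 * v))) := by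
        rw [hg, integral_const_mul, integral_gaussian]
    _ ≤ Real.sqrt 2 * rexp (-M ^ 2 / (4 * v)) := by
        have h1 : (Real.sqrt (2 * π * v))⁻¹ * Real.sqrt (π / (1/(4 * v))) = Real.sqrt 2 := by
          rw [← Real.sqrt_inv, ← Real.sqrt_mul (by positivity)]
          congr 1
          field_simp
          ring
        calc (Real.sqrt (2 * π * v))⁻¹ * rexp (-M ^ 2 / (4 * v)) * Real.sqrt (π / (1/(4 * v)))
            = ((Real.sqrt (2 * π * v))⁻¹ * Real.sqrt (π / (1/(4 * v)))) * rexp (-M ^ 2 / (4 * v)) := by ring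
          _ ≤ Real.sqrt 2 * rexp (-M ^ 2 / (4 * v)) := by rw [h1]

/-- `lE ε = log (1/ε)`. -/
noncomputable def lE (ε : ℝ) : ℝ := Real.log (1 / ε)

/-- `K_ϰ(ε) = [-(l_ε)^ϰ, (l_ε)^ϰ]`. -/
noncomputable def Kset (ϰ ε : ℝ) : Set ℝ := Set.Icc (-(lE ε ^ ϰ)) (lE ε ^ ϰ)

open Real ProbabilityTheory Filter in
noncomputable def Gbound (ρ α c : ℝ) (c₁ c₂ : NNReal) (ϰ : ℝ) (ε : ℝ) : ℝ :=
  Real.sqrt 2 * Real.exp (-(lE ε) ^ 2 / (4 * c₁)) +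
    4 * c * ρ * (lE ε ^ ϰ + lE ε) ^ (ρ - 1) * lE ε * ε ^ (α * (ρ - 1)) *
      (Real.sqrt (2 * π * c₂))⁻¹

open Real ProbabilityTheory Filter in
noncomputable def gfun (ρ c : ℝ) (c₁ c₂ : NNReal) (ϰ δ : ℝ) (t : ℝ) : ℝ :=
  Real.sqrt 2 * rexp (-t ^ 2 / (4 * c₁) + δ * t) +
    4 * c * ρ * (t ^ ϰ + t) ^ (ρ - 1) * t * (Real.sqrt (2 * π * c₂))⁻¹ *
      rexp (-(2 * δ) * t + δ * t)
open Real ProbabilityTheory Filter in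
private lemma tendsto_lE' : Tendsto lE (nhdsWithin 0 (Set.Ioi (0:ℝ))) atTop := by
  have h1 : Tendsto Real.log (nhdsWithin 0 (Set.Ioi (0:ℝ))) atBot :=
    Real.tendsto_log_nhdsGT_zero
  have h2 : Tendsto (fun ε : ℝ => -Real.log ε) (nhdsWithin 0 (Set.Ioi (0:ℝ))) atTop :=
    tendsto_neg_atBot_atTop.comp h1
  refine h2.congr fun ε => ?_
  rw [lE, one_div, Real.log_inv]

open Real ProbabilityTheory Filter in
private lemma tendsto_gfun' {ρ c : ℝ} (c₁ c₂ : NNReal) {ϰ δ : ℝ} (hρ : 1 < ρ) (hc : 0 < c)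
    (hc₁ : 0 < c₁) (hδ : 0 < δ) :
    Tendsto (gfun ρ c c₁ c₂ ϰ δ) atTop (nhds 0) := by
  have hc₁' : (0:ℝ) ≤ (c₁:ℝ) := c₁.2
  rw [show (0:ℝ) = 0 + 0 by norm_num]
  apply Tendsto.add
  · apply squeeze_zero' (g := fun t => Real.sqrt 2 * rexp (-t))
    · filter_upwards with t; positivity
    · filter_upwards [eventually_ge_atTop (4 * (c₁:ℝ) * (δ + 1)), eventually_ge_atTop 0]
        with t ht ht0
      apply mul_le_mul_of_nonneg_left _ (by positivity)
      apply Real.exp_le_exp.2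
      have h0 : (0:ℝ) < (c₁:ℝ) := by exact_mod_cast zero_lt_iff.2 hc₁.ne'
      have h4 : (0:ℝ) < 4 * (c₁:ℝ) := by positivity
      have hdiv : (δ + 1) * t ≤ t ^ 2 / (4 * (c₁:ℝ)) := by
        rw [le_div_iff₀ h4]; nlinarith
      rw [neg_div]
      linarith
    · simpa using (Real.tendsto_exp_neg_atTop_nhds_zero).const_mul (Real.sqrt 2)
  · set m := max ϰ 1 with hm
    have hm1 : 1 ≤ m := le_max_right _ _
    set s := m * (ρ - 1) + 1 with hs
    set Kc := 4 * c * ρ * (Real.sqrt (2 * π * (c₂:ℝ)))⁻¹ * 2 ^ (ρ - 1) with hKc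
    have hKc0 : 0 ≤ Kc := by positivity
    apply squeeze_zero' (g := fun t => Kc * (t ^ s * rexp (-δ * t)))
    · filter_upwards [eventually_ge_atTop (1:ℝ)] with t ht
      have ht0 : (0:ℝ) ≤ t := by linarith
      have h1 : (0:ℝ) ≤ t ^ ϰ := Real.rpow_nonneg ht0 _
      have h2 : (0:ℝ) ≤ (t ^ ϰ + t) ^ (ρ - 1) := Real.rpow_nonneg (by linarith) _
      positivity
    · filter_upwards [eventually_ge_atTop (1:ℝ)] with t ht
      have ht0 : (0:ℝ) < t := by linarith
      have hb1 : t ^ ϰ + t ≤ 2 * t ^ m := by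
        have e1 : t ^ ϰ ≤ t ^ m := Real.rpow_le_rpow_of_exponent_le ht (le_max_left _ _)
        have e2 : t ≤ t ^ m := by
          calc t = t ^ (1:ℝ) := (Real.rpow_one t).symm
            _ ≤ t ^ m := Real.rpow_le_rpow_of_exponent_le ht hm1
        linarith
      have hb2 : (t ^ ϰ + t) ^ (ρ - 1) ≤ 2 ^ (ρ - 1) * t ^ (m * (ρ - 1)) := by
        calc (t ^ ϰ + t) ^ (ρ - 1) ≤ (2 * t ^ m) ^ (ρ - 1) := by
              apply Real.rpow_le_rpow _ hb1 (by linarith)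
              have : (0:ℝ) ≤ t ^ ϰ := Real.rpow_nonneg ht0.le _
              linarith
          _ = 2 ^ (ρ - 1) * t ^ (m * (ρ - 1)) := by
              rw [Real.mul_rpow (by norm_num) (Real.rpow_nonneg ht0.le _),
                ← Real.rpow_mul ht0.le]
      have hexp : rexp (-(2 * δ) * t + δ * t) = rexp (-δ * t) := by
        congr 1; ring
      have hts : t ^ (m * (ρ - 1)) * t = t ^ s := by
        rw [hs, Real.rpow_add ht0, Real.rpow_one]
      rw [hexp]
      calc 4 * c * ρ * (t ^ ϰ + t) ^ (ρ - 1) * t * (Real.sqrt (2 * π * (c₂:ℝ)))⁻¹ *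
            rexp (-δ * t)
          ≤ 4 * c * ρ * (2 ^ (ρ - 1) * t ^ (m * (ρ - 1))) * t *
              (Real.sqrt (2 * π * (c₂:ℝ)))⁻¹ * rexp (-δ * t) := by
            have hiv : (0:ℝ) ≤ (Real.sqrt (2 * π * (c₂:ℝ)))⁻¹ := by positivity
            have hexp0 : (0:ℝ) ≤ rexp (-δ * t) := (Real.exp_pos _).le
            have h4 : (0:ℝ) ≤ 4 * c * ρ := by positivity
            have ht0' : (0:ℝ) ≤ t := ht0.le
            gcongr
        _ = Kc * (t ^ s * rexp (-δ * t)) := by rw [hKc, ← hts]; ring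
    · have := (tendsto_rpow_mul_exp_neg_mul_atTop_nhds_zero s δ hδ).const_mul Kc
      simpa using this

open Real ProbabilityTheory Filter in
private lemma Gdiv_eq {ρ α c ϰ δ : ℝ} (c₁ c₂ : NNReal) (hδ : α * (ρ - 1) = 2 * δ)
    {ε : ℝ} (hε : 0 < ε) :
    Gbound ρ α c c₁ c₂ ϰ ε / ε ^ δ = gfun ρ c c₁ c₂ ϰ δ (lE ε) := by
  have hlog : Real.log ε = -lE ε := by rw [lE, one_div, Real.log_inv, neg_neg]
  have hexpy : ∀ y : ℝ, ε ^ y = rexp (-lE ε * y) := by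
    intro y; rw [Real.rpow_def_of_pos hε, hlog]
  have hE1 : ∀ a u w : ℝ, a * rexp u / rexp w = a * rexp (u - w) := by
    intro a u w; rw [Real.exp_sub]; ring
  have hE2 : ∀ a u i w : ℝ, a * rexp u * i / rexp w = a * i * rexp (u - w) := by
    intro a u i w; rw [Real.exp_sub]; ring
  rw [Gbound, gfun, hδ, hexpy (2 * δ), hexpy δ, add_div, hE1, hE2]
  congr 2
  · ring
  · ring
open Real ProbabilityTheory Filter in
set_option maxHeartbeats 1000000 in
private lemma key_bound {Ω : Type*} [MeasurableSpace Ω] (P : Measure Ω) [IsProbabilityMeasure P]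
    (ρ α c : ℝ) (c₁ c₂ : NNReal) (ϰ : ℝ)
    (hρ : 1 < ρ) (hα0 : 0 < α) (hα1 : α ≤ 1) (hαρ : α * ρ ≤ 1)
    (hc : 0 < c) (hc₁ : 0 < c₁) (hc₂ : 0 < c₂) (hϰ : 0 < ϰ)
    (U N : Ω → ℝ) (hU : Measurable U) (hN : Measurable N)
    (hUlaw : P.map U = gaussianReal 0 c₁)
    (hNlaw : P.map N = gaussianReal 0 c₂)
    {ε : ℝ} (hε : 0 < ε) (hε1 : ε < Real.exp (-1))
    (x : ℝ) (hx : x ∈ Kset ϰ ε) (a b : ℝ) (hab : a ≤ b) :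
    |(P {ω | c * |x| ^ ρ + ε ^ (1 - α * ρ) * N ω ∈ Set.Icc a b ∧
          0 ≤ x + ε ^ (1 - α) * U ω}).toReal -
      (P {ω | c * |x + ε ^ (1 - α) * U ω| ^ ρ + ε ^ (1 - α * ρ) * N ω ∈ Set.Icc a b ∧
          0 ≤ x + ε ^ (1 - α) * U ω}).toReal| ≤ Gbound ρ α c c₁ c₂ ϰ ε := by
  have hεe : ε < 1 := hε1.trans (by rw [Real.exp_lt_one_iff]; norm_num)
  set L := lE ε with hLdef
  have hL : 1 ≤ L := by
    rw [hLdef, lE]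
    rw [Real.le_log_iff_exp_le (by positivity)]
    rw [le_div_iff₀ hε]
    have h := mul_lt_mul_of_pos_left hε1 (Real.exp_pos 1)
    rw [← Real.exp_add] at h
    norm_num at h
    exact h.le
  have hL0 : 0 < L := by linarith
  set η := ε ^ (1 - α) with hηdef
  set κ := ε ^ (1 - α * ρ) with hκdef
  have hη0 : 0 < η := Real.rpow_pos_of_pos hε _
  have hκ0 : 0 < κ := Real.rpow_pos_of_pos hε _
  have hη1 : η ≤ 1 := Real.rpow_le_one hε.le hεe.le (by linarith)
  have hLϰ : 0 ≤ L ^ ϰ := Real.rpow_nonneg hL0.le _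
  have hxabs : |x| ≤ L ^ ϰ := abs_le.2 ⟨hx.1, hx.2⟩
  set R := L ^ ϰ + L with hRdef
  have hR0 : 0 ≤ R := by positivity
  have hRρ : 0 ≤ R ^ (ρ - 1) := Real.rpow_nonneg hR0 _
  set D := c * ρ * R ^ (ρ - 1) * (η * L) with hDdef
  have hD0 : 0 ≤ D := by positivity
  set t₀ := c * |x| ^ ρ with ht₀def
  -- bound on the perturbation dd
  have hdd : ∀ ω : Ω, |U ω| ≤ L → |c * |x + η * U ω| ^ ρ - t₀| ≤ D := by
    intro ω hUω
    have h1 : |x + η * U ω| ≤ R := by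
      calc |x + η * U ω| ≤ |x| + |η * U ω| := abs_add_le _ _
        _ ≤ L ^ ϰ + η * |U ω| := by rw [abs_mul, abs_of_pos hη0]; linarith
        _ ≤ L ^ ϰ + 1 * L := by
            have : η * |U ω| ≤ 1 * L := by
              apply mul_le_mul hη1 hUω (abs_nonneg _) (by norm_num)
            linarith
        _ = R := by rw [hRdef]; ring
    have h2 : |x| ≤ R := by rw [hRdef]; linarith
    have h3 : |(x + η * U ω) - x| ≤ η * L := by
      have : (x + η * U ω) - x = η * U ω := by ring
      rw [this, abs_mul, abs_of_pos hη0]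
      exact mul_le_mul_of_nonneg_left hUω hη0.le
    have h4 := abs_rpow_lipschitz' hρ.le h1 h2
    calc |c * |x + η * U ω| ^ ρ - t₀| = c * |(|x + η * U ω| ^ ρ - |x| ^ ρ)| := by
          rw [ht₀def, ← mul_sub, abs_mul, abs_of_pos hc]
      _ ≤ c * (ρ * R ^ (ρ - 1) * |(x + η * U ω) - x|) :=
          mul_le_mul_of_nonneg_left h4 hc.le
      _ ≤ c * (ρ * R ^ (ρ - 1) * (η * L)) := by
          apply mul_le_mul_of_nonneg_left _ hc.le
          apply mul_le_mul_of_nonneg_left h3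
          positivity
      _ = D := by rw [hDdef]; ring
  set Ja := Set.Icc ((a - t₀ - D) / κ) ((a - t₀ + D) / κ) with hJadef
  set Jb := Set.Icc ((b - t₀ - D) / κ) ((b - t₀ + D) / κ) with hJbdef
  set Abig : Set Ω := {ω | t₀ + κ * N ω ∈ Set.Icc a b ∧ 0 ≤ x + η * U ω} with hAdef
  set Bbig : Set Ω := {ω | c * |x + η * U ω| ^ ρ + κ * N ω ∈ Set.Icc a b ∧
      0 ≤ x + η * U ω} with hBdef
  set Sbad : Set Ω := {ω | L < |U ω|} ∪ N ⁻¹' (Ja ∪ Jb) with hSdef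
  -- membership in strips gives N in Ja ∪ Jb
  have hstripN : ∀ ω : Ω, t₀ + κ * N ω ∈
      Set.Icc (a - D) (a + D) ∪ Set.Icc (b - D) (b + D) → N ω ∈ Ja ∪ Jb := by
    intro ω h
    rcases h with h | h
    · left
      rw [hJadef]
      obtain ⟨h1, h2⟩ := h
      constructor
      · rw [div_le_iff₀ hκ0]; nlinarith [mul_comm κ (N ω)]
      · rw [le_div_iff₀ hκ0]; nlinarith [mul_comm κ (N ω)]
    · right
      rw [hJbdef]
      obtain ⟨h1, h2⟩ := h
      constructor
      · rw [div_le_iff₀ hκ0]; nlinarith [mul_comm κ (N ω)]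
      · rw [le_div_iff₀ hκ0]; nlinarith [mul_comm κ (N ω)]
  have hsub1 : Abig ⊆ Bbig ∪ Sbad := by
    intro ω hA
    by_cases hB : ω ∈ Bbig
    · exact Or.inl hB
    right
    by_cases hUω : L < |U ω|
    · exact Or.inl hUω
    push_neg at hUω
    right
    obtain ⟨hmem, hpos⟩ := hA
    have hnot : c * |x + η * U ω| ^ ρ + κ * N ω ∉ Set.Icc a b := fun h => hB ⟨h, hpos⟩
    have heq : c * |x + η * U ω| ^ ρ + κ * N ω
        = (t₀ + κ * N ω) + (c * |x + η * U ω| ^ ρ - t₀) := by ring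
    rw [heq] at hnot
    exact hstripN ω (strip1' (hdd ω hUω) hmem hnot)
  have hsub2 : Bbig ⊆ Abig ∪ Sbad := by
    intro ω hB
    by_cases hA : ω ∈ Abig
    · exact Or.inl hA
    right
    by_cases hUω : L < |U ω|
    · exact Or.inl hUω
    push_neg at hUω
    right
    obtain ⟨hmem, hpos⟩ := hB
    have hnot : t₀ + κ * N ω ∉ Set.Icc a b := fun h => hA ⟨h, hpos⟩
    have heq : c * |x + η * U ω| ^ ρ + κ * N ω
        = (t₀ + κ * N ω) + (c * |x + η * U ω| ^ ρ - t₀) := by ring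
    rw [heq] at hmem
    exact hstripN ω (strip2' (hdd ω hUω) hnot hmem)
  -- measure bounds on the bad set
  have hJab : (a - t₀ - D) / κ ≤ (a - t₀ + D) / κ :=
    (div_le_div_iff_of_pos_right hκ0).2 (by linarith)
  have hlen : ∀ u : ℝ, (u - t₀ + D) / κ - (u - t₀ - D) / κ = 2 * (D / κ) := by
    intro u; field_simp; ring
  set ivc := (Real.sqrt (2 * π * (c₂:ℝ)))⁻¹ with hivcdef
  have hivc0 : 0 ≤ ivc := by positivity
  set r1 := Real.sqrt 2 * rexp (-L ^ 2 / (4 * (c₁:ℝ))) with hr1def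
  set r2 := 2 * (D / κ) * ivc with hr2def
  have hr10 : 0 ≤ r1 := by positivity
  have hr20 : 0 ≤ r2 := by positivity
  -- measure of each bad piece
  have hbadU : P {ω | L < |U ω|} ≤ ENNReal.ofReal r1 := by
    have hms : MeasurableSet {y : ℝ | L < |y|} :=
      measurableSet_lt measurable_const measurable_id.abs
    have hmap : P {ω | L < |U ω|} = P.map U {y : ℝ | L < |y|} := by
      rw [Measure.map_apply hU hms]; rfl
    rw [hmap, hUlaw, hr1def]
    exact gaussian_tail_le' hc₁.ne' hL0.le
  have hbadJ : ∀ u : ℝ, P (N ⁻¹' Set.Icc ((u - t₀ - D) / κ) ((u - t₀ + D) / κ))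
      ≤ ENNReal.ofReal r2 := by
    intro u
    have huw : (u - t₀ - D) / κ ≤ (u - t₀ + D) / κ := (div_le_div_iff_of_pos_right hκ0).2 (by linarith)
    have hmap : P (N ⁻¹' Set.Icc ((u - t₀ - D) / κ) ((u - t₀ + D) / κ))
        = P.map N (Set.Icc ((u - t₀ - D) / κ) ((u - t₀ + D) / κ)) := by
      rw [Measure.map_apply hN measurableSet_Icc]
    rw [hmap, hNlaw]
    refine (gaussian_Icc_le' hc₂.ne' _ _ huw).trans (le_of_eq ?_)
    congr 1
    rw [hlen u, hr2def]
  have hSbad : P Sbad ≤ ENNReal.ofReal (r1 + r2 + r2) := by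
    calc P Sbad ≤ P {ω | L < |U ω|} + P (N ⁻¹' (Ja ∪ Jb)) := measure_union_le _ _
      _ ≤ ENNReal.ofReal r1 + (P (N ⁻¹' Ja) + P (N ⁻¹' Jb)) := by
          apply add_le_add hbadU
          rw [Set.preimage_union]
          exact measure_union_le _ _
      _ ≤ ENNReal.ofReal r1 + (ENNReal.ofReal r2 + ENNReal.ofReal r2) := by
          apply add_le_add le_rfl
          exact add_le_add (hbadJ a) (hbadJ b)
      _ = ENNReal.ofReal (r1 + r2 + r2) := by
          rw [← ENNReal.ofReal_add hr20 hr20, ← ENNReal.ofReal_add hr10 (by linarith)]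
          ring_nf
  -- put it together
  have habs : |(P Abig).toReal - (P Bbig).toReal| ≤ r1 + r2 + r2 := by
    have h1 : P Abig ≤ P Bbig + ENNReal.ofReal (r1 + r2 + r2) :=
      ((measure_mono hsub1).trans (measure_union_le _ _)).trans
        (add_le_add le_rfl hSbad)
    have h2 : P Bbig ≤ P Abig + ENNReal.ofReal (r1 + r2 + r2) :=
      ((measure_mono hsub2).trans (measure_union_le _ _)).trans
        (add_le_add le_rfl hSbad)
    have hfin1 : P Bbig + ENNReal.ofReal (r1 + r2 + r2) ≠ ⊤ :=
      ENNReal.add_ne_top.2 ⟨measure_ne_top _ _, ENNReal.ofReal_ne_top⟩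
    have hfin2 : P Abig + ENNReal.ofReal (r1 + r2 + r2) ≠ ⊤ :=
      ENNReal.add_ne_top.2 ⟨measure_ne_top _ _, ENNReal.ofReal_ne_top⟩
    have h1' := ENNReal.toReal_mono hfin1 h1
    have h2' := ENNReal.toReal_mono hfin2 h2
    rw [ENNReal.toReal_add (measure_ne_top _ _) ENNReal.ofReal_ne_top,
      ENNReal.toReal_ofReal (by linarith)] at h1' h2'
    rw [abs_sub_le_iff]
    constructor <;> linarith
  -- identify with Gbound
  have hηκ : η / κ = ε ^ (α * (ρ - 1)) := by
    rw [hηdef, hκdef, ← Real.rpow_sub hε]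
    congr 1
    ring
  have hDκ : D / κ = c * ρ * R ^ (ρ - 1) * L * ε ^ (α * (ρ - 1)) := by
    rw [hDdef, ← hηκ]
    ring
  have hG : r1 + r2 + r2 ≤ Gbound ρ α c c₁ c₂ ϰ ε := by
    apply le_of_eq
    rw [hr1def, hr2def, hDκ, Gbound, ← hLdef, ← hRdef, ← hivcdef]
    ring
  exact habs.trans hG

open Real ProbabilityTheory Filter in
theorem stmt16 {Ω : Type*} [MeasurableSpace Ω] (P : Measure Ω) [IsProbabilityMeasure P]
    (ρ α c : ℝ) (c₁ c₂ : NNReal) (ϰ ϰ' : ℝ)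
    (hρ : 1 < ρ) (hα0 : 0 < α) (hα1 : α ≤ 1) (hαρ : α * ρ ≤ 1)
    (hc : 0 < c) (hc₁ : 0 < c₁) (hc₂ : 0 < c₂) (hϰ : 0 < ϰ) (hϰ' : 0 < ϰ')
    (U N : Ω → ℝ) (hU : Measurable U) (hN : Measurable N)
    (hind : ProbabilityTheory.IndepFun U N P)
    (hUlaw : P.map U = ProbabilityTheory.gaussianReal 0 c₁)
    (hNlaw : P.map N = ProbabilityTheory.gaussianReal 0 c₂) :
    ∃ δ : ℝ, 0 < δ ∧ ∀ C : ℝ, 0 < C → ∃ ε₀ : ℝ, 0 < ε₀ ∧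
      ∀ ε : ℝ, 0 < ε → ε < ε₀ →
      ∀ x ∈ Kset ϰ ε, ∀ a b : ℝ, a ≤ b → Set.Icc a b ⊆ Kset ϰ' ε →
        |(P {ω | c * |x| ^ ρ + ε ^ (1 - α * ρ) * N ω ∈ Set.Icc a b ∧
              0 ≤ x + ε ^ (1 - α) * U ω}).toReal -
          (P {ω | c * |x + ε ^ (1 - α) * U ω| ^ ρ + ε ^ (1 - α * ρ) * N ω ∈ Set.Icc a b ∧
              0 ≤ x + ε ^ (1 - α) * U ω}).toReal| ≤ C * ε ^ δ := by
  set δ := α * (ρ - 1) / 2 with hδdef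
  have hδ0 : 0 < δ := by
    rw [hδdef]
    nlinarith [mul_pos hα0 (sub_pos.2 hρ)]
  refine ⟨δ, hδ0, ?_⟩
  intro C hC
  have h2δ : α * (ρ - 1) = 2 * δ := by rw [hδdef]; ring
  have htend : Tendsto (fun ε => Gbound ρ α c c₁ c₂ ϰ ε / ε ^ δ)
      (nhdsWithin 0 (Set.Ioi (0:ℝ))) (nhds 0) := by
    have h1 := (tendsto_gfun' c₁ c₂ hρ hc hc₁ hδ0 (ϰ := ϰ)).comp tendsto_lE'
    apply h1.congr'
    filter_upwards [self_mem_nhdsWithin] with ε hε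
    exact (Gdiv_eq c₁ c₂ h2δ hε).symm
  have hev : ∀ᶠ ε in nhdsWithin 0 (Set.Ioi (0:ℝ)),
      Gbound ρ α c c₁ c₂ ϰ ε ≤ C * ε ^ δ := by
    filter_upwards [htend.eventually_lt_const hC, self_mem_nhdsWithin] with ε h1 h2
    have hε : (0:ℝ) < ε := h2
    have hp : (0:ℝ) < ε ^ δ := Real.rpow_pos_of_pos hε δ
    rw [div_lt_iff₀ hp] at h1
    linarith
  obtain ⟨u, hu, hsub⟩ := mem_nhdsGT_iff_exists_Ioo_subset.1 hev
  refine ⟨min u (Real.exp (-1)), lt_min hu (Real.exp_pos _), ?_⟩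
  intro ε hε hεlt x hx a b hab _
  have hε1 : ε < Real.exp (-1) := hεlt.trans_le (min_le_right _ _)
  have hεu : ε < u := hεlt.trans_le (min_le_left _ _)
  have hGb := hsub ⟨hε, hεu⟩
  exact (key_bound P ρ α c c₁ c₂ ϰ hρ hα0 hα1 hαρ hc hc₁ hc₂ hϰ U N hU hN hUlaw hNlaw
    hε hε1 x hx a b hab).trans hGb
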